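/- The multicast lower-bound instance M_𝒮 built with parameters C and D has congestion exactly C (every edge carries exactly C labels) and dilation exactly D (every label's induced tree has depth D). -/

import Mathlib

/-- The graph induced by a label `χ`: edges carrying `χ` in their label set. -/
def labelGraph {V L : Type*} (lab : V → V → Finset L) (χ : L) : SimpleGraph V where
  Adj u v := u ≠ v ∧ (χ ∈ lab u v ∨ χ ∈ lab v u)
  symm := ⟨fun u v h => ⟨h.1.symm, h.2.symm⟩⟩
  loopless := ⟨fun v h => h.1 rfl⟩

/-- The vertices of the multicast tree of label `χ`: its root together with all
vertices incident to an edge carrying `χ`. -/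
def labelSupp {V L : Type*} (lab : V → V → Finset L) (root : L → V) (χ : L) : Set V :=
  {v | v = root χ ∨ ∃ u, (labelGraph lab χ).Adj v u}

/-- A store-and-forward schedule for a simultaneous multicast instance: in each
synchronous round at most one packet crosses each edge, packet `m_χ` (initially known
only to `root χ`) may only traverse edges of its tree (edges whose label set contains
`χ`), and nodes may copy packets. `knows t χ` is the set of vertices knowing `m_χ`
after `t` rounds, and `send t u v` is the packet sent from `u` to `v` in round `t+1`. -/
structure Schedule (V L : Type*) (lab : V → V → Finset L) (root : L → V) where
  knows : ℕ → L → Set V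
  send : ℕ → V → V → Option L
  init : ∀ χ, knows 0 χ = {root χ}
  send_mem : ∀ t u v χ, send t u v = some χ → χ ∈ lab u v ∧ u ∈ knows t χ
  one_per_edge : ∀ t u v, (send t u v).isSome → send t v u = none
  step : ∀ t χ, knows (t+1) χ = knows t χ ∪ {v | ∃ u, send t u v = some χ}

/-- A schedule has length at most `T` (solves the instance within `T` rounds) if
after `T` rounds every vertex of every multicast tree — in particular every leaf —
knows the corresponding packet. -/
def Schedule.Solves {V L : Type*} {lab : V → V → Finset L} {root : L → V}
    (S : Schedule V L lab root) (T : ℕ) : Prop :=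
  ∀ χ v, v ∈ labelSupp lab root χ → v ∈ S.knows T χ
section LowerBoundConstruction

variable {L : Type} [DecidableEq L]

open scoped Classical

/-- The ways of "guessing" delayed trees: for each adjacent pair
`(S (2i), S (2i+1))` of label sets, a choice of `C/2` labels from each. -/
def Choices (C m : ℕ) (S : Fin (2 * m) → Finset L) : Type :=
  { f : Fin m → Finset L × Finset L //
    ∀ i : Fin m,
      (f i).1 ⊆ S ⟨2 * i.1, by have := i.isLt; omega⟩ ∧ (f i).1.card = C / 2 ∧
      (f i).2 ⊆ S ⟨2 * i.1 + 1, by have := i.isLt; omega⟩ ∧ (f i).2.card = C / 2 }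

/-- The interleaved tuple `𝒮' ∈ I(𝒮)` corresponding to a choice. -/
def mergeS {C m : ℕ} {S : Fin (2 * m) → Finset L} (f : Choices C m S) :
    Fin m → Finset L := fun i => (f.1 i).1 ∪ (f.1 i).2

def reidx {d : ℕ} (S : Fin (2 ^ (d + 1)) → Finset L) : Fin (2 * 2 ^ d) → Finset L :=
  fun j => S ⟨j.1, by
    have h1 := j.isLt
    have h2 : 2 * 2 ^ d = 2 ^ (d + 1) := by rw [pow_succ, Nat.mul_comm]
    omega⟩

/-- Non-root vertices of the lower-bound instance `M_𝒮` (recursion level `d`,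
dilation `d+1`): for `d = 0` the single vertex `v`; for `d+1` the vertices `v_i`
(the identified roots of the sub-instances) together with, for each guess
`𝒮' ∈ I(𝒮)`, the non-root vertices of `M_𝒮'`. -/
def NRv (C : ℕ) : (d : ℕ) → (Fin (2 ^ d) → Finset L) → Type :=
  Nat.rec (motive := fun d => (Fin (2 ^ d) → Finset L) → Type)
    (fun _ => PUnit)
    (fun d ih S => Fin (2 ^ d) ⊕ (Σ f : Choices C (2 ^ d) (reidx S), ih (mergeS f)))

/-- All vertices of `M_𝒮`: the roots `r_j` together with the non-root vertices. -/
def Vx (C d : ℕ) (S : Fin (2 ^ d) → Finset L) : Type := Fin (2 ^ d) ⊕ NRv C d S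

/-- The labels carried by each edge of `G_𝒮` (`∅` meaning "no edge"): for `d = 0` a
single edge `(r, v)` carrying all labels of `S 0`; for `d + 1`, root edges
`(r_j, v_{⌊j/2⌋})` carrying `S j`, together with the edges of all sub-instances
`M_𝒮'`, `𝒮' ∈ I(𝒮)`, whose roots are identified with the vertices `v_i`. -/
noncomputable def labv (C : ℕ) : (d : ℕ) → (S : Fin (2 ^ d) → Finset L) →
    Vx C d S → Vx C d S → Finset L
  | 0, S, Sum.inl _, Sum.inr _ => S ⟨0, Nat.one_pos⟩
  | 0, S, Sum.inr _, Sum.inl _ => S ⟨0, Nat.one_pos⟩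
  | 0, _, _, _ => ∅
  | d + 1, S, u, v =>
    match u, v with
    | Sum.inl j, Sum.inr (Sum.inl i) => if j.1 / 2 = i.1 then S j else ∅
    | Sum.inr (Sum.inl i), Sum.inl j => if j.1 / 2 = i.1 then S j else ∅
    | Sum.inr (Sum.inl i), Sum.inr (Sum.inr ⟨f, y⟩) =>
        labv C d (mergeS f) (Sum.inl i) (Sum.inr y)
    | Sum.inr (Sum.inr ⟨f, y⟩), Sum.inr (Sum.inl i) =>
        labv C d (mergeS f) (Sum.inr y) (Sum.inl i)
    | Sum.inr (Sum.inr ⟨f, y⟩), Sum.inr (Sum.inr ⟨f', y'⟩) =>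
        if h : f = f' then labv C d (mergeS f') (Sum.inr (h ▸ y)) (Sum.inr y') else ∅
    | _, _ => ∅

/-- The root of the multicast tree of label `χ`: the root vertex `r_j` for the
(unique) `j` with `χ ∈ S j`. -/
noncomputable def rootV (C d : ℕ) (S : Fin (2 ^ d) → Finset L) (χ : L) : Vx C d S :=
  Sum.inl (if h : ∃ j, χ ∈ S j then h.choose else ⟨0, Nat.two_pow_pos d⟩)

end LowerBoundConstruction

section Helpers
variable {L : Type} [DecidableEq L]

/-- depth level of a vertex -/
def lev (C : ℕ) : (d : ℕ) → (S : Fin (2 ^ d) → Finset L) → Vx C d S → ℕ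
  | 0, _, Sum.inl _ => 0
  | 0, _, Sum.inr _ => 1
  | _ + 1, _, Sum.inl _ => 0
  | _ + 1, _, Sum.inr (Sum.inl _) => 1
  | d + 1, _, Sum.inr (Sum.inr ⟨f, y⟩) => 1 + lev C d (mergeS f) (Sum.inr y)

lemma lev_inl (C d : ℕ) (S : Fin (2 ^ d) → Finset L) (j : Fin (2 ^ d)) :
    lev C d S (Sum.inl j) = 0 := by cases d <;> rfl

lemma lev_inr_pos (C d : ℕ) (S : Fin (2 ^ d) → Finset L) (y : NRv C d S) :
    1 ≤ lev C d S (Sum.inr y) := by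
  cases d with
  | zero => exact le_refl _
  | succ d =>
    rcases y with i | ⟨f, y⟩
    · exact le_refl _
    · simp [lev]

lemma lev_le (C : ℕ) : ∀ (d : ℕ) (S : Fin (2 ^ d) → Finset L) (v : Vx C d S),
    lev C d S v ≤ d + 1
  | 0, _, Sum.inl _ => by simp [lev]
  | 0, _, Sum.inr _ => by simp [lev]
  | d + 1, _, Sum.inl _ => by simp [lev]
  | d + 1, _, Sum.inr (Sum.inl _) => by simp [lev]
  | d + 1, S, Sum.inr (Sum.inr ⟨f, y⟩) => by
      have := lev_le C d (mergeS f) (Sum.inr y)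
      simp only [lev]; omega

-- rfl lemmas for labv at level d+1
lemma labv_li {C d : ℕ} (S : Fin (2 ^ (d+1)) → Finset L) (j : Fin (2 ^ (d+1)))
    (i : Fin (2 ^ d)) :
    labv C (d+1) S (Sum.inl j) (Sum.inr (Sum.inl i)) = if j.1 / 2 = i.1 then S j else ∅ := rfl

lemma labv_il {C d : ℕ} (S : Fin (2 ^ (d+1)) → Finset L) (j : Fin (2 ^ (d+1)))
    (i : Fin (2 ^ d)) :
    labv C (d+1) S (Sum.inr (Sum.inl i)) (Sum.inl j) = if j.1 / 2 = i.1 then S j else ∅ := rfl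

lemma labv_ll {C d : ℕ} (S : Fin (2 ^ (d+1)) → Finset L) (j j' : Fin (2 ^ (d+1))) :
    labv C (d+1) S (Sum.inl j) (Sum.inl j') = ∅ := rfl

lemma labv_lr {C d : ℕ} (S : Fin (2 ^ (d+1)) → Finset L) (j : Fin (2 ^ (d+1)))
    (f : Choices C (2 ^ d) (reidx S)) (y : NRv C d (mergeS f)) :
    labv C (d+1) S (Sum.inl j) (Sum.inr (Sum.inr ⟨f, y⟩)) = ∅ := rfl

lemma labv_rl {C d : ℕ} (S : Fin (2 ^ (d+1)) → Finset L) (j : Fin (2 ^ (d+1)))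
    (f : Choices C (2 ^ d) (reidx S)) (y : NRv C d (mergeS f)) :
    labv C (d+1) S (Sum.inr (Sum.inr ⟨f, y⟩)) (Sum.inl j) = ∅ := rfl

lemma labv_ii {C d : ℕ} (S : Fin (2 ^ (d+1)) → Finset L) (i i' : Fin (2 ^ d)) :
    labv C (d+1) S (Sum.inr (Sum.inl i)) (Sum.inr (Sum.inl i')) = ∅ := rfl

lemma labv_ir {C d : ℕ} (S : Fin (2 ^ (d+1)) → Finset L) (i : Fin (2 ^ d))
    (f : Choices C (2 ^ d) (reidx S)) (y : NRv C d (mergeS f)) :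
    labv C (d+1) S (Sum.inr (Sum.inl i)) (Sum.inr (Sum.inr ⟨f, y⟩)) =
      labv C d (mergeS f) (Sum.inl i) (Sum.inr y) := rfl

lemma labv_ri {C d : ℕ} (S : Fin (2 ^ (d+1)) → Finset L) (i : Fin (2 ^ d))
    (f : Choices C (2 ^ d) (reidx S)) (y : NRv C d (mergeS f)) :
    labv C (d+1) S (Sum.inr (Sum.inr ⟨f, y⟩)) (Sum.inr (Sum.inl i)) =
      labv C d (mergeS f) (Sum.inr y) (Sum.inl i) := rfl

lemma labv_rr_eq {C d : ℕ} (S : Fin (2 ^ (d+1)) → Finset L)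
    (f : Choices C (2 ^ d) (reidx S)) (y y' : NRv C d (mergeS f)) :
    labv C (d+1) S (Sum.inr (Sum.inr ⟨f, y⟩)) (Sum.inr (Sum.inr ⟨f, y'⟩)) =
      labv C d (mergeS f) (Sum.inr y) (Sum.inr y') := dif_pos rfl

lemma labv_rr_ne {C d : ℕ} (S : Fin (2 ^ (d+1)) → Finset L)
    (f f' : Choices C (2 ^ d) (reidx S)) (y : NRv C d (mergeS f)) (y' : NRv C d (mergeS f'))
    (h : f ≠ f') :
    labv C (d+1) S (Sum.inr (Sum.inr ⟨f, y⟩)) (Sum.inr (Sum.inr ⟨f', y'⟩)) = ∅ := dif_neg h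

end Helpers
section Helpers2
variable {L : Type} [DecidableEq L]

lemma labv0_lr {C : ℕ} (S : Fin (2 ^ 0) → Finset L) (j : Fin (2 ^ 0)) (y : NRv C 0 S) :
    labv C 0 S (Sum.inl j) (Sum.inr y) = S ⟨0, Nat.one_pos⟩ := rfl

lemma labv0_rl {C : ℕ} (S : Fin (2 ^ 0) → Finset L) (j : Fin (2 ^ 0)) (y : NRv C 0 S) :
    labv C 0 S (Sum.inr y) (Sum.inl j) = S ⟨0, Nat.one_pos⟩ := rfl

lemma labv0_ll {C : ℕ} (S : Fin (2 ^ 0) → Finset L) (j j' : Fin (2 ^ 0)) :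
    labv C 0 S (Sum.inl j) (Sum.inl j') = ∅ := rfl

lemma labv0_rr {C : ℕ} (S : Fin (2 ^ 0) → Finset L) (y y' : NRv C 0 S) :
    labv C 0 S (Sum.inr y) (Sum.inr y') = ∅ := rfl

lemma labv_ll_any (C : ℕ) (d : ℕ) (S : Fin (2 ^ d) → Finset L) (i i' : Fin (2 ^ d)) :
    labv C d S (Sum.inl i) (Sum.inl i') = ∅ := by cases d <;> rfl

lemma labv_symm (C : ℕ) : ∀ (d : ℕ) (S : Fin (2 ^ d) → Finset L) (u v : Vx C d S),
    labv C d S u v = labv C d S v u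
  | 0, S, Sum.inl _, Sum.inl _ => rfl
  | 0, S, Sum.inl _, Sum.inr _ => rfl
  | 0, S, Sum.inr _, Sum.inl _ => rfl
  | 0, S, Sum.inr _, Sum.inr _ => rfl
  | d + 1, S, Sum.inl j, Sum.inl j' => rfl
  | d + 1, S, Sum.inl j, Sum.inr (Sum.inl i) => rfl
  | d + 1, S, Sum.inr (Sum.inl i), Sum.inl j => rfl
  | d + 1, S, Sum.inl j, Sum.inr (Sum.inr ⟨f, y⟩) => rfl
  | d + 1, S, Sum.inr (Sum.inr ⟨f, y⟩), Sum.inl j => rfl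
  | d + 1, S, Sum.inr (Sum.inl i), Sum.inr (Sum.inl i') => rfl
  | d + 1, S, Sum.inr (Sum.inl i), Sum.inr (Sum.inr ⟨f, y⟩) => by
      erw [labv_ir, labv_ri, labv_symm C d]
  | d + 1, S, Sum.inr (Sum.inr ⟨f, y⟩), Sum.inr (Sum.inl i) => by
      erw [labv_ir, labv_ri, labv_symm C d]
  | d + 1, S, Sum.inr (Sum.inr ⟨f, y⟩), Sum.inr (Sum.inr ⟨f', y'⟩) => by
      by_cases h : f = f'
      · subst h
        erw [labv_rr_eq, labv_rr_eq, labv_symm C d]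
      · erw [labv_rr_ne _ _ _ _ _ h, labv_rr_ne _ _ _ _ _ (Ne.symm h)]

/-- embedding of a sub-instance into the instance at level `d+1` -/
def emb {C d : ℕ} {S : Fin (2 ^ (d+1)) → Finset L} (f : Choices C (2 ^ d) (reidx S)) :
    Vx C d (mergeS f) → Vx C (d+1) S
  | Sum.inl i => Sum.inr (Sum.inl i)
  | Sum.inr y => Sum.inr (Sum.inr ⟨f, y⟩)

lemma emb_inj {C d : ℕ} {S : Fin (2 ^ (d+1)) → Finset L} (f : Choices C (2 ^ d) (reidx S)) :
    Function.Injective (emb (C := C) (S := S) f) := by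
  intro a b h
  cases a with
  | inl i => cases b with
    | inl i' => injection h with h; injection h with h; rw [h]
    | inr y => injection h with h; injection h
  | inr y => cases b with
    | inl i' => injection h with h; injection h
    | inr y' => injection h with h; injection h with h; injection h with h1 h2; rw [h2]

lemma labv_emb {C d : ℕ} (S : Fin (2 ^ (d+1)) → Finset L) (f : Choices C (2 ^ d) (reidx S))
    (u v : Vx C d (mergeS f)) :
    labv C (d+1) S (emb f u) (emb f v) = labv C d (mergeS f) u v := by
  cases u with
  | inl i =>
    cases v with
    | inl i' => exact (labv_ii S i i').trans (labv_ll_any C d (mergeS f) i i').symm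
    | inr y => exact labv_ir S i f y
  | inr y =>
    cases v with
    | inl i => exact labv_ri S i f y
    | inr y' => exact labv_rr_eq S f y y'

lemma lev_emb {C d : ℕ} (S : Fin (2 ^ (d+1)) → Finset L) (f : Choices C (2 ^ d) (reidx S))
    (x : Vx C d (mergeS f)) :
    lev C (d+1) S (emb f x) = 1 + lev C d (mergeS f) x := by
  cases x with
  | inl i => simp [emb, lev, lev_inl]
  | inr y => rfl

end Helpers2
section Helpers3
variable {L : Type} [DecidableEq L]

lemma mergeS_card {C d : ℕ} (hCeven : Even C) {S : Fin (2 ^ (d+1)) → Finset L}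
    (hcard : ∀ j, (S j).card = C)
    (hdisj : ∀ j j', j ≠ j' → Disjoint (S j) (S j'))
    (f : Choices C (2 ^ d) (reidx S)) (i : Fin (2 ^ d)) :
    (mergeS f i).card = C := by
  obtain ⟨h1, h2, h3, h4⟩ := f.2 i
  have hne : (⟨2 * i.1, by have := i.isLt; omega⟩ : Fin (2 ^ (d+1))) ≠
      ⟨2 * i.1 + 1, by have := i.isLt; have : 2 * 2 ^ d = 2 ^ (d+1) := (by rw [pow_succ, Nat.mul_comm]); omega⟩ := by
    intro hc
    have := Fin.mk.injEq (2 * i.1) _ (2 * i.1 + 1) _ ▸ hc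
    omega
  have hdd : Disjoint ((f.1 i).1) ((f.1 i).2) :=
    Finset.disjoint_of_subset_left h1 (Finset.disjoint_of_subset_right h3 (hdisj _ _ hne))
  rw [mergeS, Finset.card_union_of_disjoint hdd, h2, h4]
  obtain ⟨c, hc⟩ := hCeven
  omega

lemma mergeS_subset {C d : ℕ} {S : Fin (2 ^ (d+1)) → Finset L}
    (f : Choices C (2 ^ d) (reidx S)) (i : Fin (2 ^ d)) :
    mergeS f i ⊆ S ⟨2 * i.1, by have := i.isLt; omega⟩ ∪
      S ⟨2 * i.1 + 1, by have h := i.isLt; have : 2 * 2 ^ d = 2 ^ (d+1) := (by rw [pow_succ, Nat.mul_comm]); omega⟩ := by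
  obtain ⟨h1, h2, h3, h4⟩ := f.2 i
  exact Finset.union_subset_union h1 h3

lemma mergeS_disj {C d : ℕ} {S : Fin (2 ^ (d+1)) → Finset L}
    (hdisj : ∀ j j', j ≠ j' → Disjoint (S j) (S j'))
    (f : Choices C (2 ^ d) (reidx S)) :
    ∀ i i', i ≠ i' → Disjoint (mergeS f i) (mergeS f i') := by
  intro i i' hne
  apply Finset.disjoint_of_subset_left (mergeS_subset f i)
  apply Finset.disjoint_of_subset_right (mergeS_subset f i')
  have hv : i.1 ≠ i'.1 := fun hc => hne (Fin.ext hc)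
  refine Finset.disjoint_union_left.mpr ⟨?_, ?_⟩ <;>
    refine Finset.disjoint_union_right.mpr ⟨?_, ?_⟩ <;>
    · apply hdisj
      intro hc
      rw [Fin.mk.injEq] at hc
      omega

lemma rootV_eq {C d : ℕ} {S : Fin (2 ^ d) → Finset L}
    (hdisj : ∀ j j', j ≠ j' → Disjoint (S j) (S j'))
    {χ : L} {j : Fin (2 ^ d)} (hj : χ ∈ S j) :
    rootV C d S χ = Sum.inl j := by
  have hex : ∃ j', χ ∈ S j' := ⟨j, hj⟩
  rw [rootV, dif_pos hex]
  have h2 := hex.choose_spec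
  congr 1
  by_contra hne
  exact Finset.disjoint_left.mp (hdisj _ _ hne) h2 hj

lemma pick {C : ℕ} (hCpos : 0 < C) (hCeven : Even C) (s : Finset L) (hs : s.card = C)
    (χ : L) : ∃ t, t ⊆ s ∧ t.card = C / 2 ∧ (χ ∈ s → χ ∈ t) := by
  obtain ⟨c, hc⟩ := hCeven
  by_cases hχ : χ ∈ s
  · obtain ⟨t₀, ht₀s, ht₀⟩ := Finset.exists_subset_card_eq
      (s := s.erase χ) (n := C / 2 - 1)
      (by rw [Finset.card_erase_of_mem hχ, hs]; omega)
    refine ⟨insert χ t₀, ?_, ?_, fun _ => Finset.mem_insert_self _ _⟩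
    · exact Finset.insert_subset hχ (ht₀s.trans (Finset.erase_subset _ _))
    · rw [Finset.card_insert_of_notMem (fun hmem => Finset.notMem_erase χ s (ht₀s hmem)), ht₀]
      omega
  · obtain ⟨t, hts, ht⟩ := Finset.exists_subset_card_eq (s := s) (n := C / 2) (by omega)
    exact ⟨t, hts, ht, fun h => absurd h hχ⟩

lemma exists_choice {C d : ℕ} (hCpos : 0 < C) (hCeven : Even C)
    (S : Fin (2 ^ (d+1)) → Finset L) (hcard : ∀ j, (S j).card = C) (χ : L) :
    ∃ f : Choices C (2 ^ d) (reidx S), ∀ (i : Fin (2 ^ d)) (j : Fin (2 * 2 ^ d)),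
      (j.1 = 2 * i.1 ∨ j.1 = 2 * i.1 + 1) → χ ∈ reidx S j → χ ∈ mergeS f i := by
  have h : ∀ j : Fin (2 * 2 ^ d), ∃ t, t ⊆ reidx S j ∧ t.card = C / 2 ∧
      (χ ∈ reidx S j → χ ∈ t) := fun j => pick hCpos hCeven _ (hcard _) χ
  choose g hg1 hg2 hg3 using h
  refine ⟨⟨fun i => (g ⟨2 * i.1, by have := i.isLt; omega⟩,
      g ⟨2 * i.1 + 1, by have := i.isLt; omega⟩),
    fun i => ⟨hg1 _, hg2 _, hg1 _, hg2 _⟩⟩, ?_⟩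
  intro i j hj hmem
  show χ ∈ g _ ∪ g _
  rcases hj with hj | hj
  · have hjeq : (⟨2 * i.1, by have := i.isLt; omega⟩ : Fin (2 * 2 ^ d)) = j :=
      Fin.ext hj.symm
    exact Finset.mem_union_left _ (hg3 _ (by rwa [hjeq]))
  · have hjeq : (⟨2 * i.1 + 1, by have := i.isLt; omega⟩ : Fin (2 * 2 ^ d)) = j :=
      Fin.ext hj.symm
    exact Finset.mem_union_right _ (hg3 _ (by rwa [hjeq]))

lemma layered {V : Type*} {G : SimpleGraph V} (ℓ : V → ℕ)
    (hstep : ∀ u v, G.Adj u v → ℓ v = ℓ u + 1 ∨ ℓ u = ℓ v + 1)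
    (huniq : ∀ v w w', G.Adj v w → G.Adj v w' → ℓ w + 1 = ℓ v → ℓ w' + 1 = ℓ v → w = w') :
    ∀ {u v : V} (p : G.Walk u v), p.IsPath →
      (∀ w, G.Adj u w → ℓ w + 1 = ℓ u → w ∉ p.support) →
      p.length + ℓ u = ℓ v := by
  intro u v p
  induction p with
  | nil => intro _ _; simp
  | @cons a b c h q ih =>
    intro hp hcond
    have hq : q.IsPath := ((SimpleGraph.Walk.cons_isPath_iff h q).mp hp).1
    have hans : a ∉ q.support := ((SimpleGraph.Walk.cons_isPath_iff h q).mp hp).2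
    have hb : ℓ b = ℓ a + 1 := by
      rcases hstep _ _ h with h1 | h1
      · exact h1
      · exact absurd (List.mem_cons_of_mem a q.start_mem_support)
          (hcond b h h1.symm ∘ (by rw [SimpleGraph.Walk.support_cons]; exact id))
    have hrec := ih hq ?_
    · rw [SimpleGraph.Walk.length_cons]
      omega
    · intro w hw hlw
      have hwa : w = a := huniq b w a hw h.symm hlw (by omega)
      subst hwa
      exact hans
section Helpers4
variable {L : Type} [DecidableEq L]

lemma lev_inr_inl {C d : ℕ} (S : Fin (2 ^ (d+1)) → Finset L) (i : Fin (2 ^ d)) :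
    lev C (d+1) S (Sum.inr (Sum.inl i)) = 1 := rfl

lemma lev_inr_inr {C d : ℕ} (S : Fin (2 ^ (d+1)) → Finset L)
    (f : Choices C (2 ^ d) (reidx S)) (y : NRv C d (mergeS f)) :
    lev C (d+1) S (Sum.inr (Sum.inr ⟨f, y⟩)) = 1 + lev C d (mergeS f) (Sum.inr y) := rfl

lemma adj_mem {C d : ℕ} {S : Fin (2 ^ d) → Finset L} {χ : L} {u v : Vx C d S}
    (h : (labelGraph (labv C d S) χ).Adj u v) : χ ∈ labv C d S u v := by
  rcases h.2 with h' | h'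
  · exact h'
  · rwa [labv_symm]

lemma key {L : Type} [DecidableEq L] (C : ℕ) (hCeven : Even C) (hCpos : 0 < C) :
    ∀ (d : ℕ) (S : Fin (2 ^ d) → Finset L),
      (∀ j, (S j).card = C) → (∀ j j', j ≠ j' → Disjoint (S j) (S j')) →
      (∀ u v, labv C d S u v ≠ ∅ → (labv C d S u v).card = C) ∧
      (∀ (χ : L) (u v : Vx C d S), (labelGraph (labv C d S) χ).Adj u v →
          lev C d S v = lev C d S u + 1 ∨ lev C d S u = lev C d S v + 1) ∧
      (∀ (χ : L) (v w w' : Vx C d S), (labelGraph (labv C d S) χ).Adj v w →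
          (labelGraph (labv C d S) χ).Adj v w' →
          lev C d S w + 1 = lev C d S v → lev C d S w' + 1 = lev C d S v → w = w') ∧
      (∀ (χ : L) (j : Fin (2 ^ d)), χ ∈ S j →
          ∃ (v : Vx C d S) (p : (labelGraph (labv C d S) χ).Walk (rootV C d S χ) v),
            p.IsPath ∧ p.length = d + 1) := by
  intro d
  induction d with
  | zero =>
    intro S hcard hdisj
    have h10 : (2:ℕ) ^ 0 = 1 := rfl
    refine ⟨?_, ?_, ?_, ?_⟩
    · intro u v hne
      rcases u with j | y <;> rcases v with j' | y'
      · rw [labv0_ll] at hne; exact absurd rfl hne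
      · rw [labv0_lr]; exact hcard _
      · rw [labv0_rl]; exact hcard _
      · rw [labv0_rr] at hne; exact absurd rfl hne
    · intro χ u v h
      have hm := adj_mem h
      rcases u with j | y <;> rcases v with j' | y'
      · rw [labv0_ll] at hm; exact absurd hm (Finset.notMem_empty χ)
      · left; rfl
      · right; rfl
      · rw [labv0_rr] at hm; exact absurd hm (Finset.notMem_empty χ)
    · intro χ v w w' h1 h2 hl1 hl2
      rcases w with j | y <;> rcases w' with j' | y'
      · have hj := j.isLt
        have hj' := j'.isLt
        congr 1
        exact Fin.ext (by omega)
      · rw [lev_inl] at hl1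
        have : lev C 0 S (Sum.inr y') = 1 := rfl
        rw [this] at hl2
        omega
      · rw [lev_inl] at hl2
        have : lev C 0 S (Sum.inr y) = 1 := rfl
        rw [this] at hl1
        omega
      · cases y; cases y'; rfl
    · intro χ j hj
      rw [rootV_eq hdisj hj]
      have hj0 : j = ⟨0, Nat.one_pos⟩ := Fin.ext (by have := j.isLt; omega)
      have hadj : (labelGraph (labv C 0 S) χ).Adj (Sum.inl j) (Sum.inr PUnit.unit) := by
        refine ⟨Sum.inl_ne_inr, Or.inl ?_⟩
        erw [labv0_lr, ← hj0]
        exact hj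
      exact ⟨Sum.inr PUnit.unit, SimpleGraph.Walk.cons hadj SimpleGraph.Walk.nil,
        SimpleGraph.Walk.IsPath.cons SimpleGraph.Walk.IsPath.nil (fun hc => Sum.inl_ne_inr (List.mem_singleton.mp hc)), rfl⟩
  | succ d ih =>
    intro S hcard hdisj
    have hlt2 : 2 ^ (d+1) = 2 * 2 ^ d := by rw [pow_succ, Nat.mul_comm]
    have ihf : ∀ f : Choices C (2 ^ d) (reidx S), _ :=
      fun f => ih (mergeS f) (mergeS_card hCeven hcard hdisj f) (mergeS_disj hdisj f)
    refine ⟨?_, ?_, ?_, ?_⟩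
    · -- congestion
      intro u v hne
      rcases u with j | i | ⟨f, y⟩ <;> rcases v with j' | i' | ⟨f', y'⟩
      · rw [labv_ll] at hne; exact absurd rfl hne
      · rw [labv_li] at hne ⊢
        split_ifs at hne ⊢ with hsp
        · exact hcard _
        · exact absurd rfl hne
      · erw [labv_lr] at hne; exact absurd rfl hne
      · rw [labv_il] at hne ⊢
        split_ifs at hne ⊢ with hsp
        · exact hcard _
        · exact absurd rfl hne
      · rw [labv_ii] at hne; exact absurd rfl hne
      · erw [labv_ir] at hne ⊢
        exact (ihf f').1 _ _ hne
      · erw [labv_rl] at hne; exact absurd rfl hne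
      · erw [labv_ri] at hne ⊢
        exact (ihf f).1 _ _ hne
      · by_cases hff : f = f'
        · subst hff
          erw [labv_rr_eq] at hne ⊢
          exact (ihf f).1 _ _ hne
        · erw [labv_rr_ne _ _ _ _ _ hff] at hne
          exact absurd rfl hne
    · -- levels across edges
      intro χ u v h
      have hm := adj_mem h
      rcases u with j | i | ⟨f, y⟩ <;> rcases v with j' | i' | ⟨f', y'⟩
      · rw [labv_ll] at hm; exact absurd hm (Finset.notMem_empty χ)
      · left; rfl
      · erw [labv_lr] at hm; exact absurd hm (Finset.notMem_empty χ)
      · right; rfl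
      · rw [labv_ii] at hm; exact absurd hm (Finset.notMem_empty χ)
      · erw [labv_ir] at hm
        have hadj : (labelGraph (labv C d (mergeS f')) χ).Adj (Sum.inl i) (Sum.inr y') :=
          ⟨Sum.inl_ne_inr, Or.inl hm⟩
        rcases (ihf f').2.1 χ _ _ hadj with h1 | h1 <;> rw [lev_inl] at h1 <;>
          erw [lev_inr_inl, lev_inr_inr] <;> omega
      · erw [labv_rl] at hm; exact absurd hm (Finset.notMem_empty χ)
      · erw [labv_ri] at hm
        have hadj : (labelGraph (labv C d (mergeS f)) χ).Adj (Sum.inr y) (Sum.inl i') :=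
          ⟨Sum.inr_ne_inl, Or.inl hm⟩
        rcases (ihf f).2.1 χ _ _ hadj with h1 | h1 <;> rw [lev_inl] at h1 <;>
          erw [lev_inr_inl, lev_inr_inr] <;> omega
      · by_cases hff : f = f'
        · subst hff
          erw [labv_rr_eq] at hm
          have hney : Sum.inr y ≠ (Sum.inr y' : Vx C d (mergeS f)) := by
            intro hc
            apply h.1
            injection hc with h2
            rw [h2]
          have hadj : (labelGraph (labv C d (mergeS f)) χ).Adj (Sum.inr y) (Sum.inr y') :=
            ⟨hney, Or.inl hm⟩
          rcases (ihf f).2.1 χ _ _ hadj with h1 | h1 <;>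
            erw [lev_inr_inr, lev_inr_inr] <;> omega
        · erw [labv_rr_ne _ _ _ _ _ hff] at hm
          exact absurd hm (Finset.notMem_empty χ)
    · -- unique parent
      intro χ v w w' h1 h2 hl1 hl2
      rcases v with j | i | ⟨f, y⟩
      · rw [lev_inl] at hl1; omega
      · rw [lev_inr_inl] at hl1 hl2
        have hw : ∀ w0 : Vx C (d+1) S, (labelGraph (labv C (d+1) S) χ).Adj (Sum.inr (Sum.inl i)) w0 →
            lev C (d+1) S w0 + 1 = 1 → ∃ j0, w0 = Sum.inl j0 ∧ χ ∈ S j0 := by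
          intro w0 ha hl
          rcases w0 with j0 | i0 | ⟨f0, y0⟩
          · have hm := adj_mem ha
            rw [labv_il] at hm
            split_ifs at hm with hsp
            · exact ⟨j0, rfl, hm⟩
            · exact absurd hm (Finset.notMem_empty χ)
          · rw [lev_inr_inl] at hl; omega
          · erw [lev_inr_inr] at hl; omega
        obtain ⟨j1, rfl, hmem1⟩ := hw w h1 hl1
        obtain ⟨j2, rfl, hmem2⟩ := hw w' h2 hl2
        congr 1
        by_contra hne
        exact Finset.disjoint_left.mp (hdisj j1 j2 hne) hmem1 hmem2
      · have hkey : ∀ w0 : Vx C (d+1) S,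
            (labelGraph (labv C (d+1) S) χ).Adj (Sum.inr (Sum.inr ⟨f, y⟩)) w0 →
            lev C (d+1) S w0 + 1 = lev C (d+1) S (Sum.inr (Sum.inr ⟨f, y⟩)) →
            ∃ x : Vx C d (mergeS f), w0 = emb f x ∧
              (labelGraph (labv C d (mergeS f)) χ).Adj (Sum.inr y) x ∧
              lev C d (mergeS f) x + 1 = lev C d (mergeS f) (Sum.inr y) := by
          intro w0 ha hl
          erw [lev_inr_inr] at hl
          rcases w0 with j0 | i0 | ⟨f0, y0⟩
          · rw [lev_inl] at hl
            have := lev_inr_pos C d (mergeS f) y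
            omega
          · have hm := adj_mem ha
            erw [labv_ri] at hm
            refine ⟨Sum.inl i0, rfl, ⟨Sum.inr_ne_inl, Or.inl hm⟩, ?_⟩
            rw [lev_inr_inl] at hl
            rw [lev_inl]
            omega
          · by_cases hff : f0 = f
            · subst hff
              have hm := adj_mem ha
              erw [labv_rr_eq] at hm
              refine ⟨Sum.inr y0, rfl, ⟨?_, Or.inl hm⟩, ?_⟩
              · intro hc
                apply ha.1
                injection hc with h2
                rw [h2]
              · erw [lev_inr_inr] at hl
                omega
            · have hm := adj_mem ha
              erw [labv_rr_ne _ _ _ _ _ (Ne.symm hff)] at hm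
              exact absurd hm (Finset.notMem_empty χ)
        obtain ⟨x1, rfl, ha1, hl1'⟩ := hkey w h1 hl1
        obtain ⟨x2, rfl, ha2, hl2'⟩ := hkey w' h2 hl2
        exact congrArg (emb f) ((ihf f).2.2.1 χ (Sum.inr y) x1 x2 ha1 ha2 hl1' hl2')
    · -- existence of a deep path
      intro χ j hj
      obtain ⟨f, hf⟩ := exists_choice hCpos hCeven S hcard χ
      have hlt : j.1 / 2 < 2 ^ d := by have := j.isLt; omega
      have hχ' : χ ∈ mergeS f ⟨j.1 / 2, hlt⟩ := by
        refine hf ⟨j.1 / 2, hlt⟩ ⟨j.1, by have := j.isLt; omega⟩ ?_ ?_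
        · show j.1 = 2 * (j.1 / 2) ∨ j.1 = 2 * (j.1 / 2) + 1
          omega
        · simpa [reidx] using hj
      obtain ⟨v', p', hp', hlen'⟩ := (ihf f).2.2.2 χ ⟨j.1 / 2, hlt⟩ hχ'
      have hr : rootV C d (mergeS f) χ = Sum.inl ⟨j.1 / 2, hlt⟩ :=
        rootV_eq (mergeS_disj hdisj f) hχ'
      let F : labelGraph (labv C d (mergeS f)) χ →g labelGraph (labv C (d+1) S) χ :=
        ⟨emb f, fun {a b} hab =>
          ⟨fun hc => hab.1 (emb_inj f hc), by rw [labv_emb, labv_emb]; exact hab.2⟩⟩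
      have hadjroot : (labelGraph (labv C (d+1) S) χ).Adj (Sum.inl j)
          (F (rootV C d (mergeS f) χ)) := by
        rw [hr]
        show (labelGraph (labv C (d+1) S) χ).Adj (Sum.inl j)
          (Sum.inr (Sum.inl ⟨j.1 / 2, hlt⟩))
        refine ⟨Sum.inl_ne_inr, Or.inl ?_⟩
        rw [labv_li, if_pos rfl]
        exact hj
      rw [rootV_eq hdisj hj]
      refine ⟨emb f v', SimpleGraph.Walk.cons hadjroot (p'.map F), ?_, ?_⟩
      · erw [SimpleGraph.Walk.cons_isPath_iff]
        refine ⟨SimpleGraph.Walk.map_isPath_of_injective (emb_inj f) hp', ?_⟩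
        intro hmem
        rw [SimpleGraph.Walk.support_map] at hmem
        obtain ⟨x, _, hx⟩ := List.mem_map.mp hmem
        rcases x with x1 | x2
        · exact Sum.inr_ne_inl hx
        · exact Sum.inr_ne_inl hx
      · erw [SimpleGraph.Walk.length_cons, SimpleGraph.Walk.length_map, hlen']

end Helpers4
/-- The multicast lower-bound instance `M_𝒮` built with parameters
`C` (even, positive) and `D = d + 1` has congestion exactly `C` — every edge carries
exactly `C` labels, and there is such an edge — and dilation exactly `D`: for every
label `χ` of the instance, every simple path in `χ`'s induced tree starting at `χ`'s
root has length at most `D`, and some such path has length exactly `D`. -/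
theorem lower_bound_instance_congestion_dilation
    {L : Type} [DecidableEq L] (C d : ℕ) (hCeven : Even C) (hCpos : 0 < C)
    (S : Fin (2 ^ d) → Finset L)
    (hcard : ∀ j, (S j).card = C)
    (hdisj : ∀ j j', j ≠ j' → Disjoint (S j) (S j')) :
    (∀ u v : Vx C d S, labv C d S u v ≠ ∅ → (labv C d S u v).card = C) ∧
    (∃ u v : Vx C d S, (labv C d S u v).card = C) ∧
    (∀ χ : L, (∃ j, χ ∈ S j) →
      (∀ (v : Vx C d S) (p : (labelGraph (labv C d S) χ).Walk (rootV C d S χ) v),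
          p.IsPath → p.length ≤ d + 1) ∧
      (∃ (v : Vx C d S) (p : (labelGraph (labv C d S) χ).Walk (rootV C d S χ) v),
          p.IsPath ∧ p.length = d + 1)) := by
  obtain ⟨hcong, hstep, huniq, hex⟩ := key C hCeven hCpos d S hcard hdisj
  refine ⟨hcong, ?_, ?_⟩
  · cases d with
    | zero =>
      refine ⟨Sum.inl ⟨0, Nat.one_pos⟩, Sum.inr PUnit.unit, ?_⟩
      erw [labv0_lr]
      exact hcard _
    | succ d =>
      refine ⟨Sum.inl ⟨0, Nat.two_pow_pos _⟩, Sum.inr (Sum.inl ⟨0, Nat.two_pow_pos _⟩), ?_⟩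
      rw [labv_li, if_pos (by norm_num)]
      exact hcard _
  · intro χ hχ
    have hroot0 : lev C d S (rootV C d S χ) = 0 := by
      rw [rootV]
      exact lev_inl _ _ _ _
    constructor
    · intro v p hp
      have hlay := layered (G := labelGraph (labv C d S) χ) (lev C d S)
        (hstep χ) (huniq χ) p hp ?_
      · have hle := lev_le C d S v
        omega
      · intro w hw hlw
        rw [hroot0] at hlw
        exact absurd hlw (by omega)
    · obtain ⟨j, hj⟩ := hχ
      exact hex χ j hj
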